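/- Let m, n, p0, q0, p1, q1 be integers with n ≠ 0, p0 ≥ 2 and gcd(p0, q0) = 1. If (m - n*p0*q0)^2 = 1 and (m - n*p0^2*p1*q1)^2 = 1, then p0 = 2, n^2 = 1, and m*n = 4*p1*q1 + 1 or m*n = 4*p1*q1 - 1. -/

import Mathlib

theorem stmt_7 (m n p0 q0 p1 q1 : ℤ) (hn : n ≠ 0) (hp0 : p0 ≥ 2)
    (hgcd : Int.gcd p0 q0 = 1)
    (h1 : (m - n * p0 * q0) ^ 2 = 1)
    (h2 : (m - n * p0 ^ 2 * p1 * q1) ^ 2 = 1) :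
    p0 = 2 ∧ n ^ 2 = 1 ∧ (m * n = 4 * p1 * q1 + 1 ∨ m * n = 4 * p1 * q1 - 1) := by
  have hp0ne : p0 ≠ 0 := by linarith
  have ha := sq_eq_one_iff.mp h1
  have hb := sq_eq_one_iff.mp h2
  -- helper for the contradiction case (same sign)
  have contra : n * p0 * q0 = n * p0 ^ 2 * p1 * q1 → False := by
    intro heq
    have h' : (n * p0) * q0 = (n * p0) * (p0 * p1 * q1) := by linear_combination heq
    have hq := mul_left_cancel₀ (mul_ne_zero hn hp0ne) h'
    have hdvd : p0 ∣ ((Int.gcd p0 q0 : ℤ)) := Int.dvd_coe_gcd dvd_rfl ⟨p1 * q1, by linear_combination hq⟩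
    rw [hgcd] at hdvd
    have := Int.le_of_dvd one_pos hdvd
    linarith
  rcases ha with ha | ha <;> rcases hb with hb | hb
  · exact absurd (by linarith) (fun h => contra h)
  · -- a = 1, b = -1
    have hdvd : p0 ∣ 2 := ⟨n * p0 * p1 * q1 - n * q0, by linear_combination hb - ha⟩
    have hle := Int.le_of_dvd (by norm_num) hdvd
    have hp2 : p0 = 2 := by omega
    subst hp2
    have h2' : (2:ℤ) * (n * (2 * p1 * q1 - q0)) = 2 * 1 := by linear_combination ha - hb
    have hunit : n * (2 * p1 * q1 - q0) = 1 := mul_left_cancel₀ two_ne_zero h2'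
    have hn1 : n = 1 ∨ n = -1 := Int.isUnit_iff.mp (IsUnit.of_mul_eq_one _ hunit)
    refine ⟨rfl, ?_, ?_⟩
    · rcases hn1 with h | h <;> subst h <;> norm_num
    · rcases hn1 with h | h <;> subst h
      · right; nlinarith [ha, hb]
      · left; nlinarith [ha, hb]
  · -- a = -1, b = 1
    have hdvd : p0 ∣ 2 := ⟨n * q0 - n * p0 * p1 * q1, by linear_combination ha - hb⟩
    have hle := Int.le_of_dvd (by norm_num) hdvd
    have hp2 : p0 = 2 := by omega
    subst hp2
    have h2' : (2:ℤ) * (n * (q0 - 2 * p1 * q1)) = 2 * 1 := by linear_combination hb - ha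
    have hunit : n * (q0 - 2 * p1 * q1) = 1 := mul_left_cancel₀ two_ne_zero h2'
    have hn1 : n = 1 ∨ n = -1 := Int.isUnit_iff.mp (IsUnit.of_mul_eq_one _ hunit)
    refine ⟨rfl, ?_, ?_⟩
    · rcases hn1 with h | h <;> subst h <;> norm_num
    · rcases hn1 with h | h <;> subst h
      · left; nlinarith [ha, hb]
      · right; nlinarith [ha, hb]
  · exact absurd (by linarith) (fun h => contra h)
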